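/- Let α be a permutation of a finite nonempty set Ω. For each integer ℓ ≥ 1 let a_ℓ denote the number of orbits of size ℓ of the cyclic group generated by α acting on Ω (so fixed points of α are counted as orbits of size 1). Then the number of permutations τ of Ω with τ² = α equals the product over ℓ from 1 to |Ω| of sr(ℓ, a_ℓ). -/

import Mathlib

def ma (m j : ℕ) : ℕ := m.factorial / ((m - 2 * j).factorial * 2 ^ j * j.factorial)

def sr (l m : ℕ) : ℕ :=
  if l % 2 = 0 then
    if m % 2 = 1 then 0 else ma m (m / 2) * l ^ (m / 2)
  else
    ∑ j ∈ Finset.range (m / 2 + 1), ma m j * l ^ j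


lemma two_pow_dvd (j : ℕ) : 2 ^ j * j.factorial ∣ (2 * j).factorial := by
  cases j with
  | zero => simp
  | succ k =>
    have h1 := Nat.factorial_eq_mul_doubleFactorial (2 * k + 1)
    have h2 : (2 * k + 1 + 1) = 2 * (k + 1) := by ring
    rw [h2, Nat.doubleFactorial_two_mul] at h1
    exact ⟨_, h1⟩

lemma ma_den_dvd {m j : ℕ} (h : 2 * j ≤ m) :
    (m - 2 * j).factorial * 2 ^ j * j.factorial ∣ m.factorial := by
  have h1 : (2 * j).factorial * (m - 2 * j).factorial ∣ m.factorial :=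
    Nat.factorial_mul_factorial_dvd_factorial h
  calc (m - 2 * j).factorial * 2 ^ j * j.factorial
      = (2 ^ j * j.factorial) * (m - 2 * j).factorial := by ring
    _ ∣ (2 * j).factorial * (m - 2 * j).factorial :=
        Nat.mul_dvd_mul_right (two_pow_dvd j) _
    _ ∣ m.factorial := h1

lemma ma_mul {m j : ℕ} (h : 2 * j ≤ m) :
    ma m j * ((m - 2 * j).factorial * 2 ^ j * j.factorial) = m.factorial :=
  Nat.div_mul_cancel (ma_den_dvd h)

lemma ma_zero (m : ℕ) : ma m 0 = 1 := by
  simp [ma, Nat.div_self (Nat.factorial_pos m)]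

lemma ma_prev_mul {n i : ℕ} (h : 2 * i ≤ n) :
    ma n i * ((n + 2 - 2 * (i + 1)).factorial * 2 ^ (i + 1) * (i + 1).factorial)
      = n.factorial * (2 * (i + 1)) := by
  have e1 : n + 2 - 2 * (i + 1) = n - 2 * i := by omega
  rw [e1, pow_succ, Nat.factorial_succ]
  calc ma n i * ((n - 2 * i).factorial * (2 ^ i * 2) * ((i + 1) * i.factorial))
      = ma n i * ((n - 2 * i).factorial * 2 ^ i * i.factorial) * (2 * (i + 1)) := by ring
    _ = n.factorial * (2 * (i + 1)) := by rw [ma_mul h]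

lemma ma_succ {m j : ℕ} (hj : 1 ≤ j) (hjm : 2 * j ≤ m) :
    ma (m + 1) j = ma m j + m * ma (m - 1) (j - 1) := by
  obtain ⟨i, rfl⟩ : ∃ i, j = i + 1 := ⟨j - 1, by omega⟩
  obtain ⟨n, rfl⟩ : ∃ n, m = n + 1 := ⟨m - 1, by omega⟩
  simp only [Nat.add_sub_cancel]
  have pos : 0 < (n + 2 - 2 * (i + 1)).factorial * 2 ^ (i + 1) * (i + 1).factorial := by
    positivity
  apply Nat.eq_of_mul_eq_mul_right pos
  rw [ma_mul (show 2 * (i + 1) ≤ n + 1 + 1 by omega)]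
  symm
  have e4 : ma (n + 1) (i + 1) * ((n + 2 - 2 * (i + 1)).factorial * 2 ^ (i + 1) * (i + 1).factorial)
      = (n + 2 - 2 * (i + 1)) * (n + 1).factorial := by
    have e1 : n + 2 - 2 * (i + 1) = (n + 1 - 2 * (i + 1)) + 1 := by omega
    rw [e1, Nat.factorial_succ, ← e1]
    calc ma (n+1) (i+1) * ((n + 2 - 2*(i+1)) * (n + 1 - 2*(i+1)).factorial * 2 ^ (i+1) * (i+1).factorial)
        = (n + 2 - 2*(i+1)) * (ma (n+1) (i+1) * ((n + 1 - 2*(i+1)).factorial * 2 ^ (i+1) * (i+1).factorial)) := by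
          ring
      _ = (n + 2 - 2*(i+1)) * (n+1).factorial := by rw [ma_mul hjm]
  calc (ma (n+1) (i+1) + (n+1) * ma n i) * ((n + 2 - 2 * (i+1)).factorial * 2 ^ (i+1) * (i+1).factorial)
      = ma (n+1) (i+1) * ((n + 2 - 2 * (i+1)).factorial * 2 ^ (i+1) * (i+1).factorial)
        + (n+1) * (ma n i * ((n + 2 - 2 * (i+1)).factorial * 2 ^ (i+1) * (i+1).factorial)) := by ring
    _ = (n + 2 - 2*(i+1)) * (n+1).factorial + (n+1) * (n.factorial * (2 * (i+1))) := by
        rw [e4, ma_prev_mul (show 2 * i ≤ n by omega)]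
    _ = (n + 2 - 2*(i+1)) * (n+1).factorial + (n+1).factorial * (2 * (i+1)) := by
        rw [Nat.factorial_succ]; ring
    _ = ((n + 2 - 2*(i+1)) + 2 * (i+1)) * (n+1).factorial := by ring
    _ = (n + 1 + 1).factorial := by
        rw [show n + 2 - 2*(i+1) + 2*(i+1) = n + 2 by omega]
        exact (Nat.factorial_succ (n+1)).symm

lemma ma_top {m j : ℕ} (hj : 1 ≤ j) (hjm : 2 * j = m + 1) :
    ma (m + 1) j = m * ma (m - 1) (j - 1) := by
  obtain ⟨i, rfl⟩ : ∃ i, j = i + 1 := ⟨j - 1, by omega⟩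
  obtain ⟨n, rfl⟩ : ∃ n, m = n + 1 := ⟨m - 1, by omega⟩
  simp only [Nat.add_sub_cancel]
  have pos : 0 < (n + 2 - 2 * (i + 1)).factorial * 2 ^ (i + 1) * (i + 1).factorial := by
    positivity
  apply Nat.eq_of_mul_eq_mul_right pos
  rw [ma_mul (show 2 * (i + 1) ≤ n + 1 + 1 by omega)]
  symm
  calc (n+1) * ma n i * ((n + 2 - 2 * (i+1)).factorial * 2 ^ (i+1) * (i+1).factorial)
      = (n+1) * (ma n i * ((n + 2 - 2 * (i+1)).factorial * 2 ^ (i+1) * (i+1).factorial)) := by ring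
    _ = (n+1) * (n.factorial * (2 * (i+1))) := by rw [ma_prev_mul (show 2 * i ≤ n by omega)]
    _ = (2 * (i+1)) * ((n+1) * n.factorial) := by ring
    _ = (n + 1 + 1).factorial := by
        rw [hjm, Nat.factorial_succ (n+1), Nat.factorial_succ n]

lemma sr_odd {l : ℕ} (hl : l % 2 = 1) (m : ℕ) :
    sr l m = ∑ j ∈ Finset.range (m / 2 + 1), ma m j * l ^ j := by
  rw [sr, if_neg (by omega)]

lemma sr_even_odd {l m : ℕ} (hl : l % 2 = 0) (hm : m % 2 = 1) : sr l m = 0 := by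
  rw [sr, if_pos hl, if_pos hm]

lemma sr_even_even {l m : ℕ} (hl : l % 2 = 0) (hm : m % 2 = 0) :
    sr l m = ma m (m / 2) * l ^ (m / 2) := by
  rw [sr, if_pos hl, if_neg (by omega)]

lemma sr_zero (l : ℕ) : sr l 0 = 1 := by
  rcases Nat.mod_two_eq_zero_or_one l with h | h
  · rw [sr_even_even h rfl]; simp [ma_zero]
  · rw [sr_odd h]; simp [ma_zero]

lemma sr_succ (l m : ℕ) :
    sr l (m + 1) = (if l % 2 = 1 then sr l m else 0) + m * l * sr l (m - 1) := by
  rcases Nat.mod_two_eq_zero_or_one l with hl | hl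
  · -- l even
    rw [if_neg (by omega)]
    rcases Nat.even_or_odd m with ⟨k, hk⟩ | ⟨k, hk⟩
    · obtain ⟨k, rfl⟩ : ∃ k', m = 2 * k' := ⟨k, by omega⟩
      rw [sr_even_odd hl (by omega)]
      rcases Nat.eq_zero_or_pos k with rfl | hk0
      · simp
      · rw [sr_even_odd hl (by omega : (2 * k - 1) % 2 = 1)]; ring
    · subst hk
      rw [sr_even_even hl (by omega), sr_even_even hl (by omega : (2 * k + 1 - 1) % 2 = 0)]
      rw [show (2 * k + 1 + 1) / 2 = k + 1 by omega, show (2 * k + 1 - 1) / 2 = k by omega]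
      have h5 : ma (2 * k + 1 + 1) (k + 1) = (2 * k + 1) * ma (2 * k + 1 - 1) k := by
        have := ma_top (m := 2 * k + 1) (j := k + 1) (by omega) (by omega)
        simpa using this
      rw [h5, pow_succ]; ring
  · -- l odd
    rw [if_pos hl, sr_odd hl, sr_odd hl]
    rcases Nat.eq_zero_or_pos m with rfl | hm
    · simp [ma_zero]
    rcases Nat.even_or_odd m with ⟨k, hk⟩ | ⟨k, hk⟩
    · obtain ⟨k, rfl⟩ : ∃ k', m = 2 * k' := ⟨k, by omega⟩
      have hk1 : 1 ≤ k := by omega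
      rw [sr_odd hl]
      rw [show (2 * k + 1) / 2 = k by omega, show (2 * k) / 2 = k by omega,
        show (2 * k - 1) / 2 = k - 1 by omega]
      rw [Finset.sum_range_succ' (fun j => ma (2 * k + 1) j * l ^ j) k]
      rw [Finset.sum_range_succ' (fun j => ma (2 * k) j * l ^ j) k]
      have key : ∀ i ∈ Finset.range k, ma (2 * k + 1) (i + 1) * l ^ (i + 1)
          = ma (2 * k) (i + 1) * l ^ (i + 1) + (2 * k) * l * (ma (2 * k - 1) i * l ^ i) := by
        intro i hi
        rw [Finset.mem_range] at hi
        have := ma_succ (m := 2 * k) (j := i + 1) (by omega) (by omega)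
        simp only [Nat.add_sub_cancel] at this
        rw [this, pow_succ]; ring
      rw [Finset.sum_congr rfl key, Finset.sum_add_distrib, ma_zero, ma_zero]
      rw [← Finset.mul_sum]
      rw [show k - 1 + 1 = k by omega]
      ring
    · subst hk
      rw [sr_odd hl]
      simp only [Nat.add_sub_cancel]
      rw [show (2 * k + 1 + 1) / 2 = k + 1 by omega, show (2 * k + 1) / 2 = k by omega,
        show (2 * k) / 2 = k by omega]
      rw [Finset.sum_range_succ (fun j => ma (2 * k + 1 + 1) j * l ^ j) (k + 1)]
      rw [Finset.sum_range_succ' (fun j => ma (2 * k + 1 + 1) j * l ^ j) k]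
      rw [Finset.sum_range_succ' (fun j => ma (2 * k + 1) j * l ^ j) k]
      rw [Finset.sum_range_succ (fun j => ma (2 * k) j * l ^ j) k]
      have key : ∀ i ∈ Finset.range k, ma (2 * k + 1 + 1) (i + 1) * l ^ (i + 1)
          = ma (2 * k + 1) (i + 1) * l ^ (i + 1) + (2 * k + 1) * l * (ma (2 * k) i * l ^ i) := by
        intro i hi
        rw [Finset.mem_range] at hi
        have := ma_succ (m := 2 * k + 1) (j := i + 1) (by omega) (by omega)
        simp only [Nat.add_sub_cancel] at this
        rw [this, pow_succ]; ring
      rw [Finset.sum_congr rfl key, Finset.sum_add_distrib, ma_zero, ma_zero]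
      rw [← Finset.mul_sum]
      have htop : ma (2 * k + 1 + 1) (k + 1) = (2 * k + 1) * ma (2 * k) k := by
        have := ma_top (m := 2 * k + 1) (j := k + 1) (by omega) (by omega)
        simpa using this
      rw [htop, pow_succ]
      ring

open Equiv Function MulAction

set_option linter.unusedSectionVars false
namespace SqrtCnt
variable {Ω : Type*} [Fintype Ω] [DecidableEq Ω]

lemma zpow_apply_add (α : Equiv.Perm Ω) (k j : ℤ) (z : Ω) :
    (α ^ (k + j)) z = (α ^ k) ((α ^ j) z) := by
  rw [zpow_add]; rfl

def orbS (α : Equiv.Perm Ω) (x : Ω) : Set Ω := Set.range fun t : ℤ => (α ^ t) x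

noncomputable def per (α : Equiv.Perm Ω) (x : Ω) : ℕ := Function.minimalPeriod ⇑α x

lemma mem_orbS {α : Equiv.Perm Ω} {x y : Ω} : y ∈ orbS α x ↔ ∃ k : ℤ, (α ^ k) x = y :=
  Set.mem_range

lemma self_mem_orbS (α : Equiv.Perm Ω) (x : Ω) : x ∈ orbS α x := ⟨0, by simp⟩

lemma zpow_mem_orbS (α : Equiv.Perm Ω) (x : Ω) (k : ℤ) : (α ^ k) x ∈ orbS α x := ⟨k, rfl⟩

lemma orbS_sameCycle {α : Equiv.Perm Ω} {x y : Ω} : y ∈ orbS α x ↔ α.SameCycle x y :=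
  Iff.rfl

lemma orbS_eq_of_mem {α : Equiv.Perm Ω} {x y : Ω} (h : y ∈ orbS α x) :
    orbS α y = orbS α x := by
  ext z
  rw [orbS_sameCycle, orbS_sameCycle]
  rw [orbS_sameCycle] at h
  exact ⟨fun hz => h.trans hz, fun hz => h.symm.trans hz⟩

lemma orbS_apply_mem {α : Equiv.Perm Ω} {x z : Ω} :
    α z ∈ orbS α x ↔ z ∈ orbS α x := by
  constructor
  · rintro ⟨k, hk⟩
    refine ⟨k - 1, ?_⟩
    show (α ^ (k - 1)) x = z
    have : (α ^ k) x = α z := hk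
    have h2 : (α ^ k) x = (α ^ (1 + (k - 1))) x := by norm_num
    rw [h2, zpow_apply_add] at this
    simpa using this
  · rintro ⟨k, hk⟩
    refine ⟨k + 1, ?_⟩
    show (α ^ (k + 1)) x = α z
    have : (α ^ k) x = z := hk
    rw [add_comm, zpow_apply_add, this]
    simp

lemma zpow_apply_eq_iff (α : Equiv.Perm Ω) (x : Ω) {k j : ℤ} :
    (α ^ k) x = (α ^ j) x ↔ (per α x : ℤ) ∣ k - j := by
  have h : ∀ n : ℤ, (α ^ n) x = x ↔ (per α x : ℤ) ∣ n := fun n =>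
    MulAction.zpow_smul_eq_iff_minimalPeriod_dvd (a := α) (b := x)
  have key : ∀ n : ℤ, (α ^ (n + j)) x = (α ^ j) x ↔ (α ^ n) x = x := by
    intro n
    rw [add_comm, zpow_apply_add]
    exact (Equiv.injective _).eq_iff
  constructor
  · intro hkj
    have h2 : (α ^ (k - j + j)) x = (α ^ j) x := by rw [sub_add_cancel]; exact hkj
    exact (h _).mp ((key _).mp h2)
  · intro hd
    have h2 : (α ^ (k - j)) x = x := (h _).mpr hd
    have h3 : (α ^ (k - j + j)) x = (α ^ j) x := (key _).mpr h2
    rw [sub_add_cancel] at h3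
    exact h3

lemma orbit_zpowers_eq (α : Equiv.Perm Ω) (x : Ω) :
    MulAction.orbit (Subgroup.zpowers α) x = orbS α x := by
  ext y
  simp only [MulAction.mem_orbit_iff, orbS, Set.mem_range]
  constructor
  · rintro ⟨⟨g, k, rfl⟩, h⟩; exact ⟨k, h⟩
  · rintro ⟨k, h⟩; exact ⟨⟨α ^ k, k, rfl⟩, h⟩

lemma card_orbS (α : Equiv.Perm Ω) (x : Ω) : Nat.card (orbS α x) = per α x := by
  rw [← orbit_zpowers_eq]
  haveI : Fintype ↑(MulAction.orbit (Subgroup.zpowers α) x) := Fintype.ofFinite _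
  rw [Nat.card_eq_fintype_card]
  exact (MulAction.minimalPeriod_eq_card α x).symm

lemma per_pos (α : Equiv.Perm Ω) (x : Ω) : 0 < per α x := by
  rw [← card_orbS]
  haveI : Nonempty (orbS α x) := ⟨⟨x, self_mem_orbS α x⟩⟩
  exact Nat.card_pos

end SqrtCnt

namespace SqrtCnt
variable {Ω : Type*} [Fintype Ω] [DecidableEq Ω]

section Restrict
variable {α : Equiv.Perm Ω} {p : Ω → Prop} (hp : ∀ z, p (α z) ↔ p z)

lemma subtypePerm_zpow_apply (k : ℤ) (z : Subtype p) :
    ((α.subtypePerm hp ^ k) z : Ω) = (α ^ k) (z : Ω) := by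
  rw [Equiv.Perm.subtypePerm_zpow]
  rfl

lemma orbS_subtypePerm_image (z : Subtype p) :
    Subtype.val '' orbS (α.subtypePerm hp) z = orbS α (z : Ω) := by
  ext w
  constructor
  · rintro ⟨u, ⟨k, rfl⟩, rfl⟩
    exact ⟨k, (subtypePerm_zpow_apply hp k z).symm⟩
  · rintro ⟨k, rfl⟩
    exact ⟨(α.subtypePerm hp ^ k) z, ⟨k, rfl⟩, subtypePerm_zpow_apply hp k z⟩

lemma per_subtypePerm (z : Subtype p) :
    per (α.subtypePerm hp) z = per α (z : Ω) := by
  haveI : Fintype (Subtype p) := Fintype.ofFinite _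
  rw [← card_orbS, ← card_orbS, ← orbS_subtypePerm_image hp z,
    Nat.card_coe_set_eq, Nat.card_coe_set_eq,
    Set.ncard_image_of_injective _ Subtype.val_injective]

end Restrict

section Comm
variable {α τ : Equiv.Perm Ω}

lemma comm_zpow (h : τ * τ = α) (k : ℤ) (z : Ω) :
    τ ((α ^ k) z) = (α ^ k) (τ z) := by
  have hc : Commute τ α := by
    rw [← h]; exact (Commute.refl τ).mul_right (Commute.refl τ)
  have := (hc.zpow_right k).eq
  calc τ ((α ^ k) z) = (τ * α ^ k) z := rfl
    _ = (α ^ k * τ) z := by rw [this]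
    _ = (α ^ k) (τ z) := rfl

lemma sq_apply (h : τ * τ = α) (z : Ω) : τ (τ z) = α z := by
  rw [← h]; rfl

/-- A square root maps the orbit of `x` onto the orbit of `τ x`. -/
lemma image_orbS (h : τ * τ = α) (x : Ω) :
    τ '' orbS α x = orbS α (τ x) := by
  ext w
  constructor
  · rintro ⟨u, ⟨k, rfl⟩, rfl⟩
    exact ⟨k, (comm_zpow h k x).symm⟩
  · rintro ⟨k, rfl⟩
    exact ⟨(α ^ k) x, ⟨k, rfl⟩, comm_zpow h k x⟩

lemma per_tau_apply (h : τ * τ = α) (x : Ω) : per α (τ x) = per α x := by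
  rw [← card_orbS, ← card_orbS, ← image_orbS h x, Nat.card_coe_set_eq,
    Nat.card_coe_set_eq, Set.ncard_image_of_injective _ (Equiv.injective τ)]

end Comm
end SqrtCnt

-- pair/single constructions
namespace SqrtCnt
open Equiv Function
variable {Ω : Type*} [Fintype Ω] [DecidableEq Ω]

lemma zpow_mem_orbS_iff (α : Equiv.Perm Ω) {x z : Ω} (k : ℤ) :
    (α ^ k) z ∈ orbS α x ↔ z ∈ orbS α x := by
  constructor
  · intro h
    have h2 : z = (α ^ (-k)) ((α ^ k) z) := by rw [← zpow_apply_add]; simp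
    rw [h2, ← orbS_eq_of_mem h]
    exact zpow_mem_orbS α _ _
  · intro h
    rw [← orbS_eq_of_mem h]
    exact zpow_mem_orbS α _ _

lemma orbS_disjoint {α : Equiv.Perm Ω} {x y : Ω} (hxy : y ∉ orbS α x) {z : Ω}
    (h1 : z ∈ orbS α x) (h2 : z ∈ orbS α y) : False := by
  rw [← orbS_eq_of_mem h1, orbS_eq_of_mem h2] at hxy
  exact hxy (self_mem_orbS α y)

lemma phase_transfer {α : Equiv.Perm Ω} {x y : Ω} (hper : per α y = per α x) {k j : ℤ}
    (h : (α ^ k) x = (α ^ j) x) : (α ^ k) y = (α ^ j) y := by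
  rw [zpow_apply_eq_iff] at h ⊢
  rw [hper]
  exact h

section Pair
variable (α : Equiv.Perm Ω) (x y : Ω)

/-- The complement of the two orbits, as a predicate. -/
def outD (z : Ω) : Prop := z ∉ orbS α x ∧ z ∉ orbS α y

lemma outD_invariant : ∀ z, outD α x y (α z) ↔ outD α x y z := by
  intro z
  unfold outD
  rw [orbS_apply_mem, orbS_apply_mem]

variable {α x y}

open scoped Classical in
/-- the underlying function of the square root built from `σ` and the pairing data. -/
noncomputable def pairFun (σ : Equiv.Perm {z // outD α x y z}) : Ω → Ω := fun z =>
  if h : z ∈ orbS α x then (α ^ (mem_orbS.mp h).choose) y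
  else if h' : z ∈ orbS α y then (α ^ ((mem_orbS.mp h').choose + 1)) x
  else ↑(σ ⟨z, h, h'⟩)

variable (σ : Equiv.Perm {z // outD α x y z})

lemma pairFun_x (hper : per α y = per α x) (k : ℤ) : pairFun σ ((α ^ k) x) = (α ^ k) y := by
  have h : (α ^ k) x ∈ orbS α x := zpow_mem_orbS α x k
  simp only [pairFun]
  rw [dif_pos h]
  exact phase_transfer hper (mem_orbS.mp h).choose_spec

lemma pairFun_y (hxy : y ∉ orbS α x) (hper : per α y = per α x) (k : ℤ) : pairFun σ ((α ^ k) y) = (α ^ (k + 1)) x := by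
  have h : (α ^ k) y ∉ orbS α x := by
    intro hmem
    exact hxy ((zpow_mem_orbS_iff α k).mp hmem)
  have h' : (α ^ k) y ∈ orbS α y := zpow_mem_orbS α y k
  simp only [pairFun]
  rw [dif_neg h, dif_pos h']
  have hs := (mem_orbS.mp h').choose_spec
  have h3 : (α ^ (mem_orbS.mp h').choose) x = (α ^ k) x :=
    phase_transfer hper.symm hs
  rw [zpow_apply_eq_iff] at h3 ⊢
  simpa using h3

lemma pairFun_out {z : Ω} (hz : outD α x y z) : pairFun σ z = ↑(σ ⟨z, hz⟩) := by
  simp only [pairFun]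
  rw [dif_neg hz.1, dif_neg hz.2]

end Pair
end SqrtCnt

namespace SqrtCnt2
open SqrtCnt
variable {Ω : Type*} [Fintype Ω] [DecidableEq Ω] {α : Equiv.Perm Ω} {x y : Ω}

lemma zpow_apply_one (α : Equiv.Perm Ω) (z : Ω) : (α ^ (1 : ℤ)) z = α z := by
  rw [zpow_one]

lemma zpow_succ_apply (α : Equiv.Perm Ω) (k : ℤ) (z : Ω) :
    (α ^ (k + 1)) z = α ((α ^ k) z) := by
  rw [add_comm, zpow_apply_add, zpow_apply_one]

variable (σ : Equiv.Perm {z // outD α x y z})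

lemma pairFun_inj (hxy : y ∉ orbS α x) (hper : per α y = per α x) :
    Function.Injective (pairFun σ) := by
  intro z1 z2 heq
  by_cases h1 : z1 ∈ orbS α x
  · obtain ⟨k1, rfl⟩ := mem_orbS.mp h1
    by_cases h2 : z2 ∈ orbS α x
    · obtain ⟨k2, rfl⟩ := mem_orbS.mp h2
      rw [pairFun_x σ hper, pairFun_x σ hper] at heq
      exact phase_transfer hper.symm heq
    · by_cases h2' : z2 ∈ orbS α y
      · obtain ⟨k2, rfl⟩ := mem_orbS.mp h2'
        rw [pairFun_x σ hper, pairFun_y σ hxy hper] at heq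
        exfalso
        have hin : (α ^ k1) y ∈ orbS α x := by rw [heq]; exact zpow_mem_orbS α x _
        exact orbS_disjoint hxy hin (zpow_mem_orbS α y k1)
      · rw [pairFun_x σ hper, pairFun_out σ ⟨h2, h2'⟩] at heq
        exfalso
        exact (σ ⟨z2, h2, h2'⟩).2.2 (by rw [← heq]; exact zpow_mem_orbS α y k1)
  · by_cases h1' : z1 ∈ orbS α y
    · obtain ⟨k1, rfl⟩ := mem_orbS.mp h1'
      by_cases h2 : z2 ∈ orbS α x
      · obtain ⟨k2, rfl⟩ := mem_orbS.mp h2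
        rw [pairFun_x σ hper, pairFun_y σ hxy hper] at heq
        exfalso
        have hin : (α ^ k2) y ∈ orbS α x := by rw [← heq]; exact zpow_mem_orbS α x _
        exact orbS_disjoint hxy hin (zpow_mem_orbS α y k2)
      · by_cases h2' : z2 ∈ orbS α y
        · obtain ⟨k2, rfl⟩ := mem_orbS.mp h2'
          rw [pairFun_y σ hxy hper, pairFun_y σ hxy hper] at heq
          have := phase_transfer hper heq
          rw [zpow_apply_eq_iff] at this ⊢
          simpa using this
        · rw [pairFun_y σ hxy hper, pairFun_out σ ⟨h2, h2'⟩] at heq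
          exfalso
          exact (σ ⟨z2, h2, h2'⟩).2.1 (by rw [← heq]; exact zpow_mem_orbS α x _)
    · by_cases h2 : z2 ∈ orbS α x
      · obtain ⟨k2, rfl⟩ := mem_orbS.mp h2
        rw [pairFun_x σ hper, pairFun_out σ ⟨h1, h1'⟩] at heq
        exfalso
        exact (σ ⟨z1, h1, h1'⟩).2.2 (by rw [heq]; exact zpow_mem_orbS α y k2)
      · by_cases h2' : z2 ∈ orbS α y
        · obtain ⟨k2, rfl⟩ := mem_orbS.mp h2'
          rw [pairFun_y σ hxy hper, pairFun_out σ ⟨h1, h1'⟩] at heq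
          exfalso
          exact (σ ⟨z1, h1, h1'⟩).2.1 (by rw [heq]; exact zpow_mem_orbS α x _)
        · rw [pairFun_out σ ⟨h1, h1'⟩, pairFun_out σ ⟨h2, h2'⟩] at heq
          have := σ.injective (Subtype.ext heq)
          exact congrArg Subtype.val this

noncomputable def pairPerm (hxy : y ∉ orbS α x) (hper : per α y = per α x) : Equiv.Perm Ω :=
  Equiv.ofBijective (pairFun σ) (Finite.injective_iff_bijective.mp (pairFun_inj σ hxy hper))

lemma pairPerm_apply (hxy : y ∉ orbS α x) (hper : per α y = per α x) (z : Ω) :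
    pairPerm σ hxy hper z = pairFun σ z := rfl

lemma pairPerm_sq (hxy : y ∉ orbS α x) (hper : per α y = per α x)
    (hσ : σ * σ = α.subtypePerm (outD_invariant α x y)) :
    pairPerm σ hxy hper * pairPerm σ hxy hper = α := by
  apply Equiv.ext
  intro z
  rw [Equiv.Perm.mul_apply]
  simp only [pairPerm_apply]
  by_cases h1 : z ∈ orbS α x
  · obtain ⟨k, rfl⟩ := mem_orbS.mp h1
    rw [pairFun_x σ hper, pairFun_y σ hxy hper, ← zpow_succ_apply]
  · by_cases h1' : z ∈ orbS α y
    · obtain ⟨k, rfl⟩ := mem_orbS.mp h1'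
      rw [pairFun_y σ hxy hper, pairFun_x σ hper, ← zpow_succ_apply]
    · rw [pairFun_out σ ⟨h1, h1'⟩, pairFun_out σ (σ ⟨z, h1, h1'⟩).2]
      have : σ ⟨↑(σ ⟨z, h1, h1'⟩), (σ ⟨z, h1, h1'⟩).2⟩ = (σ * σ) ⟨z, h1, h1'⟩ := by
        rw [Equiv.Perm.mul_apply]
      rw [this, hσ, Equiv.Perm.subtypePerm_apply]

lemma pairPerm_x (hxy : y ∉ orbS α x) (hper : per α y = per α x) :
    pairPerm σ hxy hper x = y := by
  rw [pairPerm_apply]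
  have := pairFun_x σ hper 0
  simpa using this

lemma pair_invariant {τ : Equiv.Perm Ω} (h2 : τ * τ = α) (hx : τ x = y) :
    ∀ z, outD α x y (τ z) ↔ outD α x y z := by
  have hSx : ∀ z, z ∈ orbS α x ↔ τ z ∈ orbS α y := by
    intro z
    have himg : τ '' orbS α x = orbS α y := by rw [image_orbS h2 x, hx]
    rw [← himg]
    exact ((Equiv.injective τ).mem_set_image).symm
  have hSy : ∀ z, z ∈ orbS α y ↔ τ z ∈ orbS α x := by
    intro z
    have hty : τ y = α x := by rw [← hx]; exact sq_apply h2 x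
    have himg : τ '' orbS α y = orbS α x := by
      rw [image_orbS h2 y, hty, orbS_eq_of_mem]
      exact ⟨1, by simp⟩
    rw [← himg]
    exact ((Equiv.injective τ).mem_set_image).symm
  intro z
  unfold outD
  rw [← hSx z, ← hSy z]
  tauto

noncomputable def pairEquiv (hxy : y ∉ orbS α x) (hper : per α y = per α x) :
    {τ : Equiv.Perm Ω // τ * τ = α ∧ τ x = y} ≃
      {σ : Equiv.Perm {z // outD α x y z} //
        σ * σ = α.subtypePerm (outD_invariant α x y)} where
  toFun := fun ⟨τ, h2, hx⟩ => ⟨τ.subtypePerm (pair_invariant h2 hx), by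
    ext ⟨z, hz⟩
    simp only [Equiv.Perm.mul_apply, Equiv.Perm.subtypePerm_apply]
    exact sq_apply h2 z⟩
  invFun := fun ⟨σ, hσ⟩ =>
    ⟨pairPerm σ hxy hper, pairPerm_sq σ hxy hper hσ, pairPerm_x σ hxy hper⟩
  left_inv := by
    rintro ⟨τ, h2, hx⟩
    apply Subtype.ext
    apply Equiv.ext
    intro z
    show pairFun (τ.subtypePerm (pair_invariant h2 hx)) z = τ z
    by_cases h1 : z ∈ orbS α x
    · obtain ⟨k, rfl⟩ := mem_orbS.mp h1
      rw [pairFun_x _ hper, comm_zpow h2, hx]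
    · by_cases h1' : z ∈ orbS α y
      · obtain ⟨k, rfl⟩ := mem_orbS.mp h1'
        have hty : τ y = α x := by rw [← hx]; exact sq_apply h2 x
        rw [pairFun_y _ hxy hper, comm_zpow h2, hty, ← zpow_apply_one α x,
          ← zpow_apply_add]
      · rw [pairFun_out _ ⟨h1, h1'⟩]
        rfl
  right_inv := by
    rintro ⟨σ, hσ⟩
    apply Subtype.ext
    apply Equiv.ext
    rintro ⟨z, hz⟩
    apply Subtype.ext
    show pairFun σ z = ↑(σ ⟨z, hz⟩)
    exact pairFun_out σ hz

end SqrtCnt2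

namespace SqrtCnt3
open SqrtCnt SqrtCnt2
variable {Ω : Type*} [Fintype Ω] [DecidableEq Ω] {α : Equiv.Perm Ω} {x : Ω}

def outE (α : Equiv.Perm Ω) (x : Ω) (z : Ω) : Prop := z ∉ orbS α x

lemma outE_invariant (α : Equiv.Perm Ω) (x : Ω) : ∀ z, outE α x (α z) ↔ outE α x z := by
  intro z
  unfold outE
  rw [orbS_apply_mem]

lemma zpow_per_apply {z : Ω} (hz : z ∈ orbS α x) : (α ^ (per α x : ℤ)) z = z := by
  obtain ⟨k, rfl⟩ := mem_orbS.mp hz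
  rw [← zpow_apply_add]
  rw [zpow_apply_eq_iff]
  simp

open scoped Classical in
noncomputable def singleFun (σ : Equiv.Perm {z // outE α x z}) : Ω → Ω := fun z =>
  if h : z ∈ orbS α x then (α ^ (((per α x + 1) / 2 : ℕ) : ℤ)) z else ↑(σ ⟨z, h⟩)

variable (σ : Equiv.Perm {z // outE α x z})

lemma singleFun_in {z : Ω} (h : z ∈ orbS α x) :
    singleFun σ z = (α ^ (((per α x + 1) / 2 : ℕ) : ℤ)) z := by
  simp only [singleFun]
  rw [dif_pos h]

lemma singleFun_out {z : Ω} (h : outE α x z) : singleFun σ z = ↑(σ ⟨z, h⟩) := by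
  simp only [singleFun]
  rw [dif_neg h]

lemma singleFun_inj : Function.Injective (singleFun σ) := by
  intro z1 z2 heq
  by_cases h1 : z1 ∈ orbS α x
  · by_cases h2 : z2 ∈ orbS α x
    · rw [singleFun_in σ h1, singleFun_in σ h2] at heq
      exact (Equiv.injective _) heq
    · rw [singleFun_in σ h1, singleFun_out σ h2] at heq
      exfalso
      exact (σ ⟨z2, h2⟩).2 (by rw [← heq]; exact (zpow_mem_orbS_iff α _).mpr h1)
  · by_cases h2 : z2 ∈ orbS α x
    · rw [singleFun_out σ h1, singleFun_in σ h2] at heq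
      exfalso
      exact (σ ⟨z1, h1⟩).2 (by rw [heq]; exact (zpow_mem_orbS_iff α _).mpr h2)
    · rw [singleFun_out σ h1, singleFun_out σ h2] at heq
      exact congrArg Subtype.val (σ.injective (Subtype.ext heq))

noncomputable def singlePerm : Equiv.Perm Ω :=
  Equiv.ofBijective (singleFun σ) (Finite.injective_iff_bijective.mp (singleFun_inj σ))

lemma singlePerm_apply (z : Ω) : singlePerm σ z = singleFun σ z := rfl

lemma singlePerm_sq (hodd : per α x % 2 = 1)
    (hσ : σ * σ = α.subtypePerm (outE_invariant α x)) :
    singlePerm σ * singlePerm σ = α := by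
  apply Equiv.ext
  intro z
  rw [Equiv.Perm.mul_apply]
  simp only [singlePerm_apply]
  by_cases h1 : z ∈ orbS α x
  · rw [singleFun_in σ h1, singleFun_in σ ((zpow_mem_orbS_iff α _).mpr h1),
      ← zpow_apply_add]
    have hn : (per α x + 1) / 2 + (per α x + 1) / 2 = per α x + 1 := by omega
    have he : (((per α x + 1) / 2 : ℕ) : ℤ) + (((per α x + 1) / 2 : ℕ) : ℤ)
        = (per α x : ℤ) + 1 := by
      calc (((per α x + 1) / 2 : ℕ) : ℤ) + (((per α x + 1) / 2 : ℕ) : ℤ)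
          = (((per α x + 1) / 2 + (per α x + 1) / 2 : ℕ) : ℤ) := by rw [Nat.cast_add]
        _ = ((per α x + 1 : ℕ) : ℤ) := by rw [hn]
        _ = (per α x : ℤ) + 1 := by push_cast; ring
    rw [he, zpow_apply_add, zpow_apply_one]
    exact zpow_per_apply (orbS_apply_mem.mpr h1)
  · rw [singleFun_out σ h1, singleFun_out σ (σ ⟨z, h1⟩).2]
    have : σ ⟨↑(σ ⟨z, h1⟩), (σ ⟨z, h1⟩).2⟩ = (σ * σ) ⟨z, h1⟩ := by
      rw [Equiv.Perm.mul_apply]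
    rw [this, hσ, Equiv.Perm.subtypePerm_apply]

lemma singlePerm_x : singlePerm σ x = (α ^ (((per α x + 1) / 2 : ℕ) : ℤ)) x := by
  rw [singlePerm_apply, singleFun_in σ (self_mem_orbS α x)]

lemma single_invariant {τ : Equiv.Perm Ω} (h2 : τ * τ = α) (hx : τ x ∈ orbS α x) :
    ∀ z, outE α x (τ z) ↔ outE α x z := by
  have hSx : ∀ z, z ∈ orbS α x ↔ τ z ∈ orbS α x := by
    intro z
    have himg : τ '' orbS α x = orbS α x := by
      rw [image_orbS h2 x, orbS_eq_of_mem hx]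
    constructor
    · intro h
      rw [← himg]
      exact Set.mem_image_of_mem τ h
    · intro h
      rw [← himg] at h
      exact ((Equiv.injective τ).mem_set_image).mp h
  intro z
  unfold outE
  rw [← hSx z]

noncomputable def singleEquiv (hodd : per α x % 2 = 1) :
    {τ : Equiv.Perm Ω // τ * τ = α ∧ τ x = (α ^ (((per α x + 1) / 2 : ℕ) : ℤ)) x} ≃
      {σ : Equiv.Perm {z // outE α x z} //
        σ * σ = α.subtypePerm (outE_invariant α x)} where
  toFun := fun ⟨τ, h2, hx⟩ => ⟨τ.subtypePerm (single_invariant h2 (hx ▸ zpow_mem_orbS α x _)), by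
    ext ⟨z, hz⟩
    simp only [Equiv.Perm.mul_apply, Equiv.Perm.subtypePerm_apply]
    exact sq_apply h2 z⟩
  invFun := fun ⟨σ, hσ⟩ =>
    ⟨singlePerm σ, singlePerm_sq σ hodd hσ, singlePerm_x σ⟩
  left_inv := by
    rintro ⟨τ, h2, hx⟩
    apply Subtype.ext
    apply Equiv.ext
    intro z
    show singleFun _ z = τ z
    by_cases h1 : z ∈ orbS α x
    · obtain ⟨k, rfl⟩ := mem_orbS.mp h1
      rw [singleFun_in _ ((zpow_mem_orbS_iff α _).mpr (self_mem_orbS α x)),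
        comm_zpow h2, hx, ← zpow_apply_add, ← zpow_apply_add, add_comm]
    · rw [singleFun_out _ h1]
      rfl
  right_inv := by
    rintro ⟨σ, hσ⟩
    apply Subtype.ext
    apply Equiv.ext
    rintro ⟨z, hz⟩
    apply Subtype.ext
    show singleFun σ z = ↑(σ ⟨z, hz⟩)
    exact singleFun_out σ hz

end SqrtCnt3


-- ===== counting machinery =====
namespace SqrtCnt4
open SqrtCnt SqrtCnt2 SqrtCnt3
variable {Ω : Type*} [Fintype Ω] [DecidableEq Ω] {α τ : Equiv.Perm Ω} {x : Ω}

/-- If a square root sends `x` inside its own orbit, the orbit size is odd and the image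
is forced. -/
lemma fiber_forces (h2 : τ * τ = α) (hx : τ x ∈ orbS α x) :
    per α x % 2 = 1 ∧ τ x = (α ^ (((per α x + 1) / 2 : ℕ) : ℤ)) x := by
  obtain ⟨k, hk⟩ := mem_orbS.mp hx
  have hsq : (α ^ (k + k)) x = (α ^ (1 : ℤ)) x := by
    rw [zpow_apply_one, zpow_apply_add, hk, ← comm_zpow h2 k x, hk]
    exact sq_apply h2 x
  have hdvd : ((per α x : ℤ)) ∣ (k + k - 1) := (zpow_apply_eq_iff α x).mp hsq
  obtain ⟨c, hc⟩ := hdvd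
  have hodd : per α x % 2 = 1 := by
    rcases Nat.even_or_odd (per α x) with ⟨t, ht⟩ | hoddL
    · exfalso
      have h3 : (k + k - 1 : ℤ) = 2 * ((t : ℤ) * c) := by
        rw [hc, ht]; push_cast; ring
      omega
    · exact Nat.odd_iff.mp hoddL
  refine ⟨hodd, ?_⟩
  rw [← hk]
  rw [zpow_apply_eq_iff]
  -- per ∣ k - hh, where 2 * hh = per + 1
  have hhh : 2 * ((per α x + 1) / 2) = per α x + 1 := by omega
  have hcodd : Odd c := by
    by_contra hce
    rw [Int.not_odd_iff_even] at hce
    obtain ⟨t, ht⟩ := hce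
    have : (k + k - 1 : ℤ) = 2 * ((per α x : ℤ) * t) := by rw [hc, ht]; ring
    omega
  obtain ⟨d, hd⟩ := hcodd
  obtain ⟨v, hv⟩ : ∃ v : ℤ, (per α x : ℤ) * d = v := ⟨_, rfl⟩
  refine ⟨d, ?_⟩
  have h5 : (k + k - 1 : ℤ) = 2 * v + (per α x : ℤ) := by
    rw [hc, hd, ← hv]; ring
  have h6 : (2 : ℤ) * ((per α x + 1) / 2 : ℕ) = (per α x : ℤ) + 1 := by
    exact_mod_cast congrArg (Nat.cast : ℕ → ℤ) hhh
  rw [hv]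
  omega

/-- the orbit-counting function. -/
noncomputable def cnt (α : Equiv.Perm Ω) (ℓ : ℕ) : ℕ :=
  Nat.card {s : Set Ω // (∃ w, s = orbS α w) ∧ Nat.card s = ℓ}

section Restr
variable {p : Ω → Prop} (hp : ∀ z, p (α z) ↔ p z)

lemma orbS_subtypePerm_preimage (z : Subtype p) :
    Subtype.val ⁻¹' orbS α (z : Ω) = orbS (α.subtypePerm hp) z := by
  ext u
  constructor
  · intro hu
    obtain ⟨k, hk⟩ := mem_orbS.mp hu
    exact ⟨k, Subtype.ext (by rw [subtypePerm_zpow_apply]; exact hk)⟩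
  · rintro ⟨k, rfl⟩
    show ((α.subtypePerm hp ^ k) z : Ω) ∈ orbS α (z : Ω)
    rw [subtypePerm_zpow_apply]
    exact zpow_mem_orbS α _ k

noncomputable def cntEquiv (ℓ : ℕ) :
    {s : Set (Subtype p) // (∃ w, s = orbS (α.subtypePerm hp) w) ∧ Nat.card s = ℓ} ≃
      {s : Set Ω // ((∃ w, s = orbS α w) ∧ Nat.card s = ℓ) ∧ ∀ z ∈ s, p z} where
  toFun u := ⟨Subtype.val '' u.val, by
    obtain ⟨⟨w, hw⟩, hc⟩ := u.2
    refine ⟨⟨⟨w.val, by rw [hw]; exact orbS_subtypePerm_image hp w⟩, ?_⟩, ?_⟩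
    · rw [Nat.card_coe_set_eq, Set.ncard_image_of_injective _ Subtype.val_injective,
        ← Nat.card_coe_set_eq]
      exact hc
    · rintro z ⟨u', _, rfl⟩
      exact u'.2⟩
  invFun t := ⟨Subtype.val ⁻¹' t.val, by
    have hrange : t.val ⊆ Set.range (Subtype.val : Subtype p → Ω) :=
      fun z hz => ⟨⟨z, t.2.2 z hz⟩, rfl⟩
    have himg : Subtype.val '' (Subtype.val ⁻¹' t.val) = t.val :=
      Set.image_preimage_eq_of_subset hrange
    obtain ⟨⟨w, hw⟩, hc⟩ := t.2.1
    have hpw : p w := t.2.2 w (by rw [hw]; exact self_mem_orbS α w)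
    constructor
    · refine ⟨⟨w, hpw⟩, ?_⟩
      rw [hw]
      exact orbS_subtypePerm_preimage hp ⟨w, hpw⟩
    · rw [Nat.card_coe_set_eq, ← Set.ncard_image_of_injective _ Subtype.val_injective,
        himg, ← Nat.card_coe_set_eq]
      exact hc⟩
  left_inv u := Subtype.ext (Set.preimage_image_eq _ Subtype.val_injective)
  right_inv t := Subtype.ext (Set.image_preimage_eq_of_subset
    (fun z hz => ⟨⟨z, t.2.2 z hz⟩, rfl⟩))

lemma cnt_restrict (ℓ : ℕ) :
    cnt (α.subtypePerm hp) ℓ =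
      Nat.card {s : Set Ω // ((∃ w, s = orbS α w) ∧ Nat.card s = ℓ) ∧ ∀ z ∈ s, p z} :=
  Nat.card_congr (cntEquiv hp ℓ)

end Restr
end SqrtCnt4


-- ===== subtype cardinal helpers =====
namespace SqrtCnt5
open SqrtCnt SqrtCnt2 SqrtCnt3 SqrtCnt4
variable {Ω : Type*} [Fintype Ω] [DecidableEq Ω] {α : Equiv.Perm Ω}

lemma card_remove {T : Type*} [Finite T] (P : T → Prop) (c : T) (hc : P c) :
    Nat.card {t // P t} = Nat.card {t // P t ∧ t ≠ c} + 1 := by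
  classical
  have e : {t // P t} ≃ Sum {t // P t ∧ t ≠ c} PUnit.{1} :=
    { toFun := fun u => if h : u.val = c then Sum.inr PUnit.unit else Sum.inl ⟨u.val, u.2, h⟩
      invFun := fun v => match v with
        | Sum.inl s => ⟨s.val, s.2.1⟩
        | Sum.inr _ => ⟨c, hc⟩
      left_inv := by
        rintro ⟨t, ht⟩
        by_cases h : t = c
        · simp only [dif_pos h]
          exact Subtype.ext h.symm
        · simp only [dif_neg h]
      right_inv := by
        rintro (⟨s, hs, hne⟩ | u)
        · simp only [dif_neg hne]
        · obtain ⟨⟩ := u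
          simp }
  rw [Nat.card_congr e, Nat.card_sum]
  simp

lemma orbit_avoid_iff {s : Set Ω} (ho : ∃ w, s = orbS α w) (x : Ω) :
    (∀ z ∈ s, z ∉ orbS α x) ↔ s ≠ orbS α x := by
  obtain ⟨w, rfl⟩ := ho
  constructor
  · intro h heq
    exact h x (heq ▸ self_mem_orbS α x) (self_mem_orbS α x)
  · intro hne z hzs hzx
    exact hne (by rw [← orbS_eq_of_mem hzs, orbS_eq_of_mem hzx])

lemma orb_of_mem_orbitSet {s : Set Ω} (hex : ∃ w, s = orbS α w) {z : Ω} (hz : z ∈ s) :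
    orbS α z = s := by
  obtain ⟨w, rfl⟩ := hex
  exact orbS_eq_of_mem hz

-- ===== the number of points outside `orbS α x` with period ℓ =====

noncomputable def pointOrbEquiv (α : Equiv.Perm Ω) (x : Ω) (ℓ : ℕ) :
    {y : Ω // per α y = ℓ ∧ y ∉ orbS α x} ≃
      Σ s : {s : Set Ω // ((∃ w, s = orbS α w) ∧ Nat.card s = ℓ) ∧ s ≠ orbS α x},
        {y : {y : Ω // per α y = ℓ ∧ y ∉ orbS α x} // orbS α y.val = s.val} :=
  (Equiv.sigmaFiberEquiv (fun y : {y : Ω // per α y = ℓ ∧ y ∉ orbS α x} =>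
    (⟨orbS α y.val, ⟨⟨y.val, rfl⟩, by rw [card_orbS]; exact y.2.1⟩, by
      intro heq
      exact y.2.2 ((Set.ext_iff.mp heq _).mp (self_mem_orbS α y.val))⟩ :
      {s : Set Ω // ((∃ w, s = orbS α w) ∧ Nat.card s = ℓ) ∧ s ≠ orbS α x}))).symm.trans
    (Equiv.sigmaCongrRight (fun s => Equiv.subtypeEquivRight (fun y => by
      constructor
      · intro h
        exact congrArg Subtype.val h
      · intro h
        exact Subtype.ext h)))

noncomputable def fiberOrbEquiv (α : Equiv.Perm Ω) (x : Ω) (ℓ : ℕ)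
    (s : {s : Set Ω // ((∃ w, s = orbS α w) ∧ Nat.card s = ℓ) ∧ s ≠ orbS α x}) :
    {y : {y : Ω // per α y = ℓ ∧ y ∉ orbS α x} // orbS α y.val = s.val} ≃ ↥(s.val) where
  toFun u := ⟨u.val.val, (Set.ext_iff.mp u.2 _).mp (self_mem_orbS α u.val.val)⟩
  invFun z :=
    ⟨⟨z.val, by
        rw [← card_orbS α z.val, orb_of_mem_orbitSet s.2.1.1 z.2]
        exact s.2.1.2, by
        intro h
        exact s.2.2 (by rw [← orb_of_mem_orbitSet s.2.1.1 z.2, orbS_eq_of_mem h])⟩,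
      orb_of_mem_orbitSet s.2.1.1 z.2⟩
  left_inv u := by
    apply Subtype.ext
    apply Subtype.ext
    rfl
  right_inv z := rfl

lemma card_points (α : Equiv.Perm Ω) (x : Ω) (ℓ : ℕ) :
    Nat.card {y : Ω // per α y = ℓ ∧ y ∉ orbS α x}
      = Nat.card {s : Set Ω // ((∃ w, s = orbS α w) ∧ Nat.card s = ℓ) ∧ s ≠ orbS α x}
          * ℓ := by
  classical
  rw [Nat.card_congr ((pointOrbEquiv α x ℓ).trans
    (Equiv.sigmaCongrRight (fiberOrbEquiv α x ℓ)))]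
  letI : Fintype {s : Set Ω // ((∃ w, s = orbS α w) ∧ Nat.card s = ℓ) ∧ s ≠ orbS α x} :=
    Fintype.ofFinite _
  letI : ∀ s : {s : Set Ω // ((∃ w, s = orbS α w) ∧ Nat.card s = ℓ) ∧ s ≠ orbS α x},
      Fintype ↥(s.val) := fun s => Fintype.ofFinite _
  rw [Nat.card_eq_fintype_card, Fintype.card_sigma]
  have hterm : ∀ s : {s : Set Ω // ((∃ w, s = orbS α w) ∧ Nat.card s = ℓ) ∧ s ≠ orbS α x},
      Fintype.card ↥(s.val) = ℓ := by
    intro s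
    rw [← Nat.card_eq_fintype_card]
    exact s.2.1.2
  rw [Finset.sum_congr rfl (fun s _ => hterm s), Finset.sum_const, smul_eq_mul,
    Finset.card_univ, Nat.card_eq_fintype_card]

/-- no orbits longer than the cardinality of the carrier. -/
lemma cnt_eq_zero_of_gt {ℓ : ℕ} (h : Fintype.card Ω < ℓ) : cnt α ℓ = 0 := by
  rw [cnt, Nat.card_eq_zero]
  left
  constructor
  rintro ⟨s, hex, hcard⟩
  have : Nat.card s ≤ Fintype.card Ω := by
    rw [Nat.card_coe_set_eq]
    calc s.ncard ≤ (Set.univ : Set Ω).ncard := Set.ncard_le_ncard (Set.subset_univ s)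
      _ = Fintype.card Ω := by rw [Set.ncard_univ, Nat.card_eq_fintype_card]
  omega

end SqrtCnt5


-- ===== transfer lemmas and helpers for the main induction =====
namespace SqrtCnt6
open SqrtCnt SqrtCnt2 SqrtCnt3 SqrtCnt4 SqrtCnt5 Equiv
variable {Ω : Type*} [Fintype Ω] [DecidableEq Ω] {α : Equiv.Perm Ω}

lemma per_le_card (α : Equiv.Perm Ω) (x : Ω) : per α x ≤ Fintype.card Ω := by
  rw [← card_orbS, Nat.card_coe_set_eq]
  calc (orbS α x).ncard ≤ (Set.univ : Set Ω).ncard :=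
        Set.ncard_le_ncard (Set.subset_univ _)
    _ = Fintype.card Ω := by rw [Set.ncard_univ, Nat.card_eq_fintype_card]

lemma key_empty [IsEmpty Ω] (α : Equiv.Perm Ω) :
    Nat.card {τ : Equiv.Perm Ω // τ * τ = α} =
      ∏ ℓ ∈ Finset.Icc 1 (Fintype.card Ω), sr ℓ (cnt α ℓ) := by
  have h0 : Fintype.card Ω = 0 := Fintype.card_eq_zero
  rw [h0, show Finset.Icc 1 0 = ∅ from Finset.Icc_eq_empty (by omega), Finset.prod_empty]
  haveI : Unique {τ : Equiv.Perm Ω // τ * τ = α} :=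
    { default := ⟨1, Subsingleton.elim _ _⟩
      uniq := fun u => Subtype.ext (Subsingleton.elim _ _) }
  rw [Nat.card_unique]

lemma prod_ext {Ω' : Type*} [Fintype Ω'] [DecidableEq Ω'] (α' : Equiv.Perm Ω') {N : ℕ}
    (h : Fintype.card Ω' ≤ N) :
    ∏ ℓ ∈ Finset.Icc 1 (Fintype.card Ω'), sr ℓ (cnt α' ℓ)
      = ∏ ℓ ∈ Finset.Icc 1 N, sr ℓ (cnt α' ℓ) := by
  apply Finset.prod_subset (Finset.Icc_subset_Icc_right h)
  intro ℓ hmem hnot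
  rw [Finset.mem_Icc] at hmem hnot
  have : Fintype.card Ω' < ℓ := by omega
  rw [cnt_eq_zero_of_gt this, sr_zero]

lemma fiber_zero_of_ne_per (α : Equiv.Perm Ω) (x y : Ω) (h : per α y ≠ per α x) :
    Nat.card {τ : Equiv.Perm Ω // τ * τ = α ∧ τ x = y} = 0 := by
  rw [Nat.card_eq_zero]
  left
  constructor
  rintro ⟨τ, h2, hx⟩
  exact h (by rw [← hx]; exact per_tau_apply h2 x)

lemma fiber_zero_in (α : Equiv.Perm Ω) (x : Ω) {y : Ω} (hy : y ∈ orbS α x)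
    (h : ¬(per α x % 2 = 1 ∧ y = (α ^ (((per α x + 1) / 2 : ℕ) : ℤ)) x)) :
    Nat.card {τ : Equiv.Perm Ω // τ * τ = α ∧ τ x = y} = 0 := by
  rw [Nat.card_eq_zero]
  left
  constructor
  rintro ⟨τ, h2, hx⟩
  have := fiber_forces h2 (by rw [hx]; exact hy)
  rw [hx] at this
  exact h this

section Transfer
variable (x : Ω)

lemma cnt_single_ne {ℓ : ℕ} (hne : ℓ ≠ per α x) :
    cnt (α.subtypePerm (outE_invariant α x)) ℓ = cnt α ℓ := by
  rw [cnt_restrict, cnt]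
  apply Nat.card_congr
  apply Equiv.subtypeEquivRight
  intro s
  constructor
  · rintro ⟨hA, _⟩
    exact hA
  · intro hA
    refine ⟨hA, ?_⟩
    intro z hz hzx
    apply hne
    rw [← hA.2, ← orb_of_mem_orbitSet hA.1 hz, orbS_eq_of_mem hzx, card_orbS]

lemma cnt_single_eq :
    cnt (α.subtypePerm (outE_invariant α x)) (per α x) + 1 = cnt α (per α x) := by
  rw [cnt_restrict, cnt]
  have e1 : Nat.card {s : Set Ω //
        ((∃ w, s = orbS α w) ∧ Nat.card s = per α x) ∧ ∀ z ∈ s, outE α x z}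
      = Nat.card {s : Set Ω //
        ((∃ w, s = orbS α w) ∧ Nat.card s = per α x) ∧ s ≠ orbS α x} := by
    apply Nat.card_congr
    apply Equiv.subtypeEquivRight
    intro s
    exact and_congr_right fun hA => orbit_avoid_iff hA.1 x
  rw [e1]
  exact (card_remove _ (orbS α x) ⟨⟨x, rfl⟩, card_orbS α x⟩).symm

variable {y : Ω}

lemma cnt_pair_ne (hper : per α y = per α x) {ℓ : ℕ} (hne : ℓ ≠ per α x) :
    cnt (α.subtypePerm (outD_invariant α x y)) ℓ = cnt α ℓ := by
  rw [cnt_restrict, cnt]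
  apply Nat.card_congr
  apply Equiv.subtypeEquivRight
  intro s
  constructor
  · rintro ⟨hA, _⟩
    exact hA
  · intro hA
    refine ⟨hA, ?_⟩
    intro z hz
    constructor
    · intro hzx
      apply hne
      rw [← hA.2, ← orb_of_mem_orbitSet hA.1 hz, orbS_eq_of_mem hzx, card_orbS]
    · intro hzy
      apply hne
      rw [← hA.2, ← orb_of_mem_orbitSet hA.1 hz, orbS_eq_of_mem hzy, card_orbS]
      exact hper

lemma cnt_pair_eq (hxy : y ∉ orbS α x) (hper : per α y = per α x) :
    cnt (α.subtypePerm (outD_invariant α x y)) (per α x) + 2 = cnt α (per α x) := by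
  rw [cnt_restrict, cnt]
  have hSyx : orbS α y ≠ orbS α x := fun he =>
    hxy (by rw [← he]; exact self_mem_orbS α y)
  have e1 : Nat.card {s : Set Ω //
        ((∃ w, s = orbS α w) ∧ Nat.card s = per α x) ∧ ∀ z ∈ s, outD α x y z}
      = Nat.card {s : Set Ω //
        (((∃ w, s = orbS α w) ∧ Nat.card s = per α x) ∧ s ≠ orbS α x) ∧ s ≠ orbS α y} := by
    apply Nat.card_congr
    apply Equiv.subtypeEquivRight
    intro s
    constructor
    · rintro ⟨hA, hout⟩
      refine ⟨⟨hA, ?_⟩, ?_⟩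
      · exact (orbit_avoid_iff hA.1 x).mp (fun z hz => (hout z hz).1)
      · exact (orbit_avoid_iff hA.1 y).mp (fun z hz => (hout z hz).2)
    · rintro ⟨⟨hA, hnex⟩, hney⟩
      exact ⟨hA, fun z hz =>
        ⟨(orbit_avoid_iff hA.1 x).mpr hnex z hz, (orbit_avoid_iff hA.1 y).mpr hney z hz⟩⟩
  rw [e1]
  have step2 : Nat.card {s : Set Ω //
        ((∃ w, s = orbS α w) ∧ Nat.card s = per α x) ∧ s ≠ orbS α x}
      = Nat.card {s : Set Ω //
        (((∃ w, s = orbS α w) ∧ Nat.card s = per α x) ∧ s ≠ orbS α x) ∧ s ≠ orbS α y} + 1 :=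
    card_remove
      (fun s : Set Ω => ((∃ w, s = orbS α w) ∧ Nat.card s = per α x) ∧ s ≠ orbS α x)
      (orbS α y) ⟨⟨⟨y, rfl⟩, by rw [card_orbS]; exact hper⟩, hSyx⟩
  have step1 : Nat.card {s : Set Ω // (∃ w, s = orbS α w) ∧ Nat.card s = per α x}
      = Nat.card {s : Set Ω //
        ((∃ w, s = orbS α w) ∧ Nat.card s = per α x) ∧ s ≠ orbS α x} + 1 :=
    card_remove
      (fun s : Set Ω => (∃ w, s = orbS α w) ∧ Nat.card s = per α x)
      (orbS α x) ⟨⟨x, rfl⟩, card_orbS α x⟩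
  omega

end Transfer
end SqrtCnt6


-- ===== the main induction =====
namespace SqrtCnt7
open SqrtCnt SqrtCnt2 SqrtCnt3 SqrtCnt4 SqrtCnt5 SqrtCnt6 Equiv

universe u

lemma key (n : ℕ) : ∀ (Ω : Type u) [Fintype Ω] [DecidableEq Ω] (α : Equiv.Perm Ω),
    Fintype.card Ω ≤ n →
    Nat.card {τ : Equiv.Perm Ω // τ * τ = α} =
      ∏ ℓ ∈ Finset.Icc 1 (Fintype.card Ω), sr ℓ (cnt α ℓ) := by
  induction n with
  | zero =>
    intro Ω _ _ α hle
    haveI : IsEmpty Ω := Fintype.card_eq_zero_iff.mp (Nat.le_zero.mp hle)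
    exact key_empty α
  | succ n ih =>
    intro Ω _ _ α hle
    rcases isEmpty_or_nonempty Ω with hE | hNE
    · exact key_empty α
    classical
    obtain ⟨x⟩ := hNE
    have hL1 : 1 ≤ per α x := per_pos α x
    have hLleN : per α x ≤ Fintype.card Ω := per_le_card α x
    have hLmem : per α x ∈ Finset.Icc 1 (Fintype.card Ω) := Finset.mem_Icc.mpr ⟨hL1, hLleN⟩
    have hAL : 1 ≤ cnt α (per α x) := by
      haveI : Nonempty {s : Set Ω // (∃ w, s = orbS α w) ∧ Nat.card s = per α x} :=
        ⟨⟨orbS α x, ⟨x, rfl⟩, card_orbS α x⟩⟩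
      rw [cnt]
      exact Nat.card_pos
    -- fiber decomposition over the image of x
    have hsum : Nat.card {τ : Equiv.Perm Ω // τ * τ = α}
        = ∑ y : Ω, Nat.card {τ : Equiv.Perm Ω // τ * τ = α ∧ τ x = y} := by
      have e : {τ : Equiv.Perm Ω // τ * τ = α}
          ≃ Σ y : Ω, {τ : Equiv.Perm Ω // τ * τ = α ∧ τ x = y} :=
        (Equiv.sigmaFiberEquiv
          (fun u : {τ : Equiv.Perm Ω // τ * τ = α} => u.val x)).symm.trans
          (Equiv.sigmaCongrRight fun y => Equiv.subtypeSubtypeEquivSubtypeInter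
            (fun τ : Equiv.Perm Ω => τ * τ = α) (fun τ => τ x = y))
      rw [Nat.card_congr e, Nat.card_eq_fintype_card, Fintype.card_sigma]
      apply Finset.sum_congr rfl
      intro y _
      rw [Nat.card_eq_fintype_card]
    -- value of the odd (single-orbit) fiber
    have hNsingle : Nat.card {σ : Equiv.Perm {z // outE α x z} //
          σ * σ = α.subtypePerm (outE_invariant α x)}
        = sr (per α x) (cnt α (per α x) - 1)
            * ∏ ℓ ∈ (Finset.Icc 1 (Fintype.card Ω)).erase (per α x), sr ℓ (cnt α ℓ) := by
      have hxnotE : ¬ outE α x x := fun h => h (self_mem_orbS α x)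
      have hcardE : Fintype.card {z // outE α x z} ≤ n := by
        have := Fintype.card_subtype_lt (p := outE α x) (x := x) hxnotE
        omega
      rw [ih _ (α.subtypePerm (outE_invariant α x)) hcardE,
        prod_ext _ (Fintype.card_subtype_le _),
        ← Finset.mul_prod_erase _ _ hLmem]
      have hc1 : cnt (α.subtypePerm (outE_invariant α x)) (per α x)
          = cnt α (per α x) - 1 := by
        have := cnt_single_eq x (α := α)
        omega
      rw [hc1]
      congr 1
      exact Finset.prod_congr rfl fun ℓ hℓ => by
        rw [cnt_single_ne x (Finset.mem_erase.mp hℓ).1]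
    -- value of the pair fibers
    have hNpair : ∀ y, y ∉ orbS α x → per α y = per α x →
        Nat.card {τ : Equiv.Perm Ω // τ * τ = α ∧ τ x = y}
          = sr (per α x) (cnt α (per α x) - 2)
              * ∏ ℓ ∈ (Finset.Icc 1 (Fintype.card Ω)).erase (per α x), sr ℓ (cnt α ℓ) := by
      intro y hxy hper
      rw [Nat.card_congr (pairEquiv hxy hper)]
      have hxnotD : ¬ outD α x y x := fun h => h.1 (self_mem_orbS α x)
      have hcardD : Fintype.card {z // outD α x y z} ≤ n := by
        have := Fintype.card_subtype_lt (p := outD α x y) (x := x) hxnotD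
        omega
      rw [ih _ (α.subtypePerm (outD_invariant α x y)) hcardD,
        prod_ext _ (Fintype.card_subtype_le _),
        ← Finset.mul_prod_erase _ _ hLmem]
      have hc2 : cnt (α.subtypePerm (outD_invariant α x y)) (per α x)
          = cnt α (per α x) - 2 := by
        have := cnt_pair_eq x hxy hper
        omega
      rw [hc2]
      congr 1
      exact Finset.prod_congr rfl fun ℓ hℓ => by
        rw [cnt_pair_ne x hper (Finset.mem_erase.mp hℓ).1]
    -- evaluate the sum
    rw [hsum, ← Finset.sum_filter_add_sum_filter_not Finset.univ (fun y => y ∈ orbS α x)]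
    have hpart1 : ∑ y ∈ Finset.univ.filter (fun y => y ∈ orbS α x),
        Nat.card {τ : Equiv.Perm Ω // τ * τ = α ∧ τ x = y}
        = if per α x % 2 = 1 then
            sr (per α x) (cnt α (per α x) - 1)
              * ∏ ℓ ∈ (Finset.Icc 1 (Fintype.card Ω)).erase (per α x), sr ℓ (cnt α ℓ)
          else 0 := by
      by_cases hodd : per α x % 2 = 1
      · rw [if_pos hodd]
        have hm : (α ^ (((per α x + 1) / 2 : ℕ) : ℤ)) x
            ∈ Finset.univ.filter (fun y => y ∈ orbS α x) :=
          Finset.mem_filter.mpr ⟨Finset.mem_univ _, zpow_mem_orbS α x _⟩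
        have hz : ∀ y ∈ Finset.univ.filter (fun y => y ∈ orbS α x),
            y ≠ (α ^ (((per α x + 1) / 2 : ℕ) : ℤ)) x →
            Nat.card {τ : Equiv.Perm Ω // τ * τ = α ∧ τ x = y} = 0 := by
          intro y hy hney
          exact fiber_zero_in α x (Finset.mem_filter.mp hy).2 (fun hc => hney hc.2)
        rw [Finset.sum_eq_single_of_mem _ hm hz]
        rw [Nat.card_congr (singleEquiv hodd), hNsingle]
      · rw [if_neg hodd]
        apply Finset.sum_eq_zero
        intro y hy
        exact fiber_zero_in α x (Finset.mem_filter.mp hy).2 (fun hc => hodd hc.1)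
    have hpart2 : ∑ y ∈ Finset.univ.filter (fun y => ¬ y ∈ orbS α x),
        Nat.card {τ : Equiv.Perm Ω // τ * τ = α ∧ τ x = y}
        = ((cnt α (per α x) - 1) * per α x) *
            (sr (per α x) (cnt α (per α x) - 2)
              * ∏ ℓ ∈ (Finset.Icc 1 (Fintype.card Ω)).erase (per α x), sr ℓ (cnt α ℓ)) := by
      have hterm : ∀ y ∈ Finset.univ.filter (fun y => ¬ y ∈ orbS α x),
          Nat.card {τ : Equiv.Perm Ω // τ * τ = α ∧ τ x = y}
            = if per α y = per α x then
                sr (per α x) (cnt α (per α x) - 2)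
                  * ∏ ℓ ∈ (Finset.Icc 1 (Fintype.card Ω)).erase (per α x), sr ℓ (cnt α ℓ)
              else 0 := by
        intro y hy
        by_cases hp : per α y = per α x
        · rw [if_pos hp]
          exact hNpair y (Finset.mem_filter.mp hy).2 hp
        · rw [if_neg hp]
          exact fiber_zero_of_ne_per α x y hp
      rw [Finset.sum_congr rfl hterm, ← Finset.sum_filter, Finset.filter_filter,
        Finset.sum_const, smul_eq_mul]
      congr 1
      -- count the points outside the orbit with the same period
      have hfeq : Finset.univ.filter (fun y : Ω => ¬ y ∈ orbS α x ∧ per α y = per α x)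
          = Finset.univ.filter (fun y : Ω => per α y = per α x ∧ y ∉ orbS α x) := by
        ext y
        simp [and_comm]
      rw [hfeq, ← Fintype.card_subtype, ← Nat.card_eq_fintype_card,
        card_points α x (per α x)]
      have hstep : cnt α (per α x)
          = Nat.card {s : Set Ω //
              ((∃ w, s = orbS α w) ∧ Nat.card s = per α x) ∧ s ≠ orbS α x} + 1 :=
        card_remove
          (fun s : Set Ω => (∃ w, s = orbS α w) ∧ Nat.card s = per α x)
          (orbS α x) ⟨⟨x, rfl⟩, card_orbS α x⟩
      have hg : Nat.card {s : Set Ω //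
            ((∃ w, s = orbS α w) ∧ Nat.card s = per α x) ∧ s ≠ orbS α x}
          = cnt α (per α x) - 1 := by omega
      rw [hg]
    rw [hpart1, hpart2, ← Finset.mul_prod_erase _ _ hLmem]
    obtain ⟨m, hm⟩ : ∃ m, cnt α (per α x) = m + 1 := ⟨cnt α (per α x) - 1, by omega⟩
    rw [hm]
    simp only [Nat.add_sub_cancel]
    rw [show m + 1 - 2 = m - 1 by omega, sr_succ]
    by_cases hodd : per α x % 2 = 1
    · rw [if_pos hodd, if_pos hodd]
      ring
    · rw [if_neg hodd, if_neg hodd]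
      ring

end SqrtCnt7

theorem stmt_0 {Ω : Type*} [Fintype Ω] [DecidableEq Ω] [Nonempty Ω]
    (α : Equiv.Perm Ω) (a : ℕ → ℕ)
    (ha : ∀ ℓ : ℕ, a ℓ =
      Nat.card {s : Set Ω // (∃ x : Ω, s = Set.range fun t : ℤ => (α ^ t) x) ∧
        Nat.card s = ℓ}) :
    Nat.card {τ : Equiv.Perm Ω // τ * τ = α} =
      ∏ ℓ ∈ Finset.Icc 1 (Fintype.card Ω), sr ℓ (a ℓ) := by
  classical
  rw [SqrtCnt7.key (Fintype.card Ω) Ω α le_rfl]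
  apply Finset.prod_congr rfl
  intro ℓ _
  congr 1
  rw [ha ℓ]
  rfl
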